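/- Two vertices v and w of the curve complex of Σ_{0,5} are connected by an edge if and only if the associated Farey graphs F_v and F_w in the pants graph of Σ_{0,5} intersect, in which case they intersect in exactly one vertex. -/
import Mathlib


open scoped Classical

/-- An abstract model of the isotopy classes of essential non-peripheral
simple closed curves on the five-times punctured sphere `Σ_{0,5}`, with the
geometric intersection number. -/
structure Sigma05Curves where
  Curve : Type
  inter : Curve → Curve → ℕ
  inter_symm : ∀ a b, inter a b = inter b a

/-- A pants decomposition of `Σ_{0,5}`: a pair of disjoint non-isotopic
curves. -/
def IsPD (M : Sigma05Curves) (P : Finset M.Curve) : Prop :=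
  P.card = 2 ∧ ∀ a ∈ P, ∀ b ∈ P, a ≠ b → M.inter a b = 0

/-- The Farey graph `F_v` in the pants graph associated to a curve `α`
(a vertex `v` of the curve complex): the set of all pants decompositions
containing `α`. -/
def FareyOf (M : Sigma05Curves) (α : M.Curve) : Set (Finset M.Curve) :=
  {P | IsPD M P ∧ α ∈ P}

lemma mem_inter_eq_pair (M : Sigma05Curves) (α β : M.Curve) (hne : α ≠ β)
    (P : Finset M.Curve) (hP : P ∈ FareyOf M α ∩ FareyOf M β) :
    P = {α, β} := by
  obtain ⟨⟨⟨hc, _⟩, hα⟩, ⟨_, hβ⟩⟩ := hP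
  symm
  apply Finset.eq_of_subset_of_card_le
  · intro x hx
    rcases Finset.mem_insert.mp hx with h | h
    · exact h ▸ hα
    · exact (Finset.mem_singleton.mp h) ▸ hβ
  · rw [hc, Finset.card_pair hne]

/-- two vertices `v`, `w` of the curve complex of `Σ_{0,5}`
(curves `α ≠ β`) are joined by an edge (i.e. `α` and `β` are disjoint) iff the
associated Farey graphs `F_v`, `F_w` of the pants graph intersect; and in that
case they intersect in exactly one vertex. -/
theorem sigma05_farey_intersection (M : Sigma05Curves) (α β : M.Curve)
    (hne : α ≠ β) :
    (M.inter α β = 0 ↔ (FareyOf M α ∩ FareyOf M β).Nonempty) ∧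
      (M.inter α β = 0 →
        ∃! P : Finset M.Curve, P ∈ FareyOf M α ∩ FareyOf M β) := by
  have hpair : M.inter α β = 0 → ({α, β} : Finset M.Curve) ∈ FareyOf M α ∩ FareyOf M β := by
    intro h0
    have hpd : IsPD M {α, β} := by
      constructor
      · rw [Finset.card_insert_of_notMem (by simp [hne]), Finset.card_singleton]
      · intro a ha b hb hab
        simp only [Finset.mem_insert, Finset.mem_singleton] at ha hb
        rcases ha with rfl | rfl <;> rcases hb with rfl | rfl
        · exact absurd rfl hab
        · exact h0
        · rw [M.inter_symm]; exact h0
        · exact absurd rfl hab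
    exact ⟨⟨hpd, by simp⟩, ⟨hpd, by simp⟩⟩
  constructor
  · constructor
    · intro h0; exact ⟨_, hpair h0⟩
    · rintro ⟨P, hP⟩
      obtain ⟨⟨⟨_, hdisj⟩, hα⟩, ⟨_, hβ⟩⟩ := hP
      exact hdisj α hα β hβ hne
  · intro h0
    exact ⟨{α, β}, hpair h0, fun P hP => mem_inter_eq_pair M α β hne P hP⟩
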